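/- Let α, β > 0 and define ω(u,v) = log((β/α²)·(cosh(α u) − cos(α v))) on the open set where cosh(α u) > cos(α v). Then ω satisfies the system ω_uu + ω_vv = 0 and ω_uv + ω_u·ω_v = 0. -/

import Mathlib

/-- Partial derivative in the first variable. -/
noncomputable def Du (f : ℝ → ℝ → ℝ) : ℝ → ℝ → ℝ := fun u v => deriv (fun x => f x v) u

/-- Partial derivative in the second variable. -/
noncomputable def Dv (f : ℝ → ℝ → ℝ) : ℝ → ℝ → ℝ := fun u v => deriv (fun y => f u y) v

/-- For α, β > 0, ω(u,v) = log((β/α²)(cosh(αu) − cos(αv))) satisfies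
ω_uu + ω_vv = 0 and ω_uv + ω_u ω_v = 0 where cosh(αu) > cos(αv). -/
theorem stmt_5 (α β : ℝ) (hα : 0 < α) (hβ : 0 < β)
    (ω : ℝ → ℝ → ℝ)
    (hω : ∀ u v : ℝ, ω u v
      = Real.log ((β / α ^ 2) * (Real.cosh (α * u) - Real.cos (α * v)))) :
    ∀ u v : ℝ, Real.cos (α * v) < Real.cosh (α * u) →
      (Du (Du ω) u v + Dv (Dv ω) u v = 0) ∧
      (Dv (Du ω) u v + (Du ω u v) * (Dv ω u v) = 0) := by
  set c : ℝ := β / α ^ 2 with hc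
  have hc0 : 0 < c := by positivity
  -- first derivatives
  have key1 : ∀ x y : ℝ, Real.cos (α * y) < Real.cosh (α * x) →
      Du ω x y = α * Real.sinh (α * x) / (Real.cosh (α * x) - Real.cos (α * y)) := by
    intro x y hxy
    have hg : (0:ℝ) < Real.cosh (α * x) - Real.cos (α * y) := sub_pos.mpr hxy
    have h1 : HasDerivAt (fun t : ℝ => α * t) α x := by
      simpa using (hasDerivAt_id x).const_mul α
    have h2 : HasDerivAt (fun t => Real.cosh (α * t)) (Real.sinh (α * x) * α) x :=
      (Real.hasDerivAt_cosh (α * x)).comp x h1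
    have h3 : HasDerivAt (fun t => c * (Real.cosh (α * t) - Real.cos (α * y)))
        (c * (Real.sinh (α * x) * α)) x := (h2.sub_const _).const_mul c
    have h4 := h3.log (by positivity)
    have e : Du ω x y
        = deriv (fun t => Real.log (c * (Real.cosh (α * t) - Real.cos (α * y)))) x := by
      unfold Du; congr 1; funext t; exact hω t y
    rw [e, h4.deriv]
    field_simp
  have key2 : ∀ x y : ℝ, Real.cos (α * y) < Real.cosh (α * x) →
      Dv ω x y = α * Real.sin (α * y) / (Real.cosh (α * x) - Real.cos (α * y)) := by
    intro x y hxy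
    have hg : (0:ℝ) < Real.cosh (α * x) - Real.cos (α * y) := sub_pos.mpr hxy
    have h1 : HasDerivAt (fun t : ℝ => α * t) α y := by
      simpa using (hasDerivAt_id y).const_mul α
    have h2 : HasDerivAt (fun t => Real.cos (α * t)) (-Real.sin (α * y) * α) y :=
      (Real.hasDerivAt_cos (α * y)).comp y h1
    have h3 : HasDerivAt (fun t => c * (Real.cosh (α * x) - Real.cos (α * t)))
        (c * (-(-Real.sin (α * y) * α))) y := (h2.const_sub _).const_mul c
    have h4 := h3.log (by positivity)
    have e : Dv ω x y
        = deriv (fun t => Real.log (c * (Real.cosh (α * x) - Real.cos (α * t)))) y := by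
      unfold Dv; congr 1; funext t; exact hω x t
    rw [e, h4.deriv]
    field_simp
  intro u v h
  have hg : (0:ℝ) < Real.cosh (α * u) - Real.cos (α * v) := sub_pos.mpr h
  have hopenu : IsOpen {x : ℝ | Real.cos (α * v) < Real.cosh (α * x)} :=
    isOpen_lt continuous_const (Real.continuous_cosh.comp (continuous_const.mul continuous_id))
  have hopenv : IsOpen {y : ℝ | Real.cos (α * y) < Real.cosh (α * u)} :=
    isOpen_lt (Real.continuous_cos.comp (continuous_const.mul continuous_id)) continuous_const
  -- Du Du
  have ev1 : (fun x => Du ω x v) =ᶠ[nhds u]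
      (fun x => α * Real.sinh (α * x) / (Real.cosh (α * x) - Real.cos (α * v))) := by
    filter_upwards [hopenu.mem_nhds h] with x hx using key1 x v hx
  have h1 : HasDerivAt (fun t : ℝ => α * t) α u := by
      simpa using (hasDerivAt_id u).const_mul α
  have hnum : HasDerivAt (fun x => α * Real.sinh (α * x)) (α * (Real.cosh (α * u) * α)) u :=
    ((Real.hasDerivAt_sinh (α * u)).comp u h1).const_mul α
  have hden : HasDerivAt (fun x => Real.cosh (α * x) - Real.cos (α * v))
      (Real.sinh (α * u) * α) u :=
    ((Real.hasDerivAt_cosh (α * u)).comp u h1).sub_const _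
  have hDuu : Du (Du ω) u v
      = (α * (Real.cosh (α * u) * α) * (Real.cosh (α * u) - Real.cos (α * v))
          - α * Real.sinh (α * u) * (Real.sinh (α * u) * α))
        / (Real.cosh (α * u) - Real.cos (α * v)) ^ 2 := by
    show deriv (fun x => Du ω x v) u = _
    rw [ev1.deriv_eq]
    exact (hnum.div hden hg.ne').deriv
  -- Dv Dv
  have ev2 : (fun y => Dv ω u y) =ᶠ[nhds v]
      (fun y => α * Real.sin (α * y) / (Real.cosh (α * u) - Real.cos (α * y))) := by
    filter_upwards [hopenv.mem_nhds h] with y hy using key2 u y hy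
  have h1v : HasDerivAt (fun t : ℝ => α * t) α v := by
      simpa using (hasDerivAt_id v).const_mul α
  have hnumv : HasDerivAt (fun y => α * Real.sin (α * y)) (α * (Real.cos (α * v) * α)) v :=
    ((Real.hasDerivAt_sin (α * v)).comp v h1v).const_mul α
  have hdenv : HasDerivAt (fun y => Real.cosh (α * u) - Real.cos (α * y))
      (-(-Real.sin (α * v) * α)) v :=
    ((Real.hasDerivAt_cos (α * v)).comp v h1v).const_sub _
  have hDvv : Dv (Dv ω) u v
      = (α * (Real.cos (α * v) * α) * (Real.cosh (α * u) - Real.cos (α * v))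
          - α * Real.sin (α * v) * (-(-Real.sin (α * v) * α)))
        / (Real.cosh (α * u) - Real.cos (α * v)) ^ 2 := by
    show deriv (fun y => Dv ω u y) v = _
    rw [ev2.deriv_eq]
    exact (hnumv.div hdenv hg.ne').deriv
  -- Dv Du
  have ev3 : (fun y => Du ω u y) =ᶠ[nhds v]
      (fun y => α * Real.sinh (α * u) / (Real.cosh (α * u) - Real.cos (α * y))) := by
    filter_upwards [hopenv.mem_nhds h] with y hy using key1 u y hy
  have hnumc : HasDerivAt (fun _ : ℝ => α * Real.sinh (α * u)) 0 v := hasDerivAt_const _ _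
  have hDuv : Dv (Du ω) u v
      = (0 * (Real.cosh (α * u) - Real.cos (α * v))
          - α * Real.sinh (α * u) * (-(-Real.sin (α * v) * α)))
        / (Real.cosh (α * u) - Real.cos (α * v)) ^ 2 := by
    show deriv (fun y => Du ω u y) v = _
    rw [ev3.deriv_eq]
    exact (hnumc.div hdenv hg.ne').deriv
  have id1 : Real.cosh (α * u) ^ 2 - Real.sinh (α * u) ^ 2 = 1 :=
    Real.cosh_sq_sub_sinh_sq _
  have id2 : Real.sin (α * v) ^ 2 + Real.cos (α * v) ^ 2 = 1 :=
    Real.sin_sq_add_cos_sq _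
  constructor
  · rw [hDuu, hDvv]
    rw [← add_div, div_eq_zero_iff]
    left
    nlinarith [id1, id2]
  · rw [hDuv, key1 u v h, key2 u v h]
    field_simp
    ring
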